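/- arXiv:1601.06928 — 3 statements merged into one kernel-verified Lean document; each statement's English description precedes it below -/
import Mathlib

section
/- Let N be a positive integer and for each j ≥ 0 let P_j denote the set of positive divisors d of N with Ω(d) = j, where Ω(d) is the number of prime factors of d counted with multiplicity. For a subset S ⊆ P_j define the neighborhood N(S) = {y ∈ P_{j+1} : there exists x ∈ S with x dividing y}. If |P_j| ≤ |P_{j+1}|, then for every subset S ⊆ P_j one has |S| ≤ |N(S)|. -/
open ArithmeticFunction
open scoped ArithmeticFunction.Omega

/-- The level sets of the divisor lattice of `N`: the set of positive divisors `d` of `N`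
with `Ω d = j`, where `Ω` counts prime factors with multiplicity. -/
def divisorLevel (N : ℕ) (j : ℕ) : Finset ℕ :=
  N.divisors.filter (fun d => d.primeFactorsList.length = j)

/-- The neighborhood of `S ⊆ P_j` inside `P_{j+1}`: all `y ∈ P_{j+1}` divisible by some
element of `S`. -/
def divisorNeighbor (N : ℕ) (j : ℕ) (S : Finset ℕ) : Finset ℕ :=
  (divisorLevel N (j + 1)).filter (fun y => ∃ x ∈ S, x ∣ y)

/-- A symmetric chain decomposition of the divisor lattice of `N`, presented as a partial
successor function `next` together with the rank `low` of the bottom of each chain. -/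
structure Scd (N : ℕ) where
  next : ℕ → Option ℕ
  low : ℕ → ℕ
  step : ∀ d ∈ N.divisors, ∀ y, next d = some y →
    y ∈ N.divisors ∧ d ∣ y ∧ Ω y = Ω d + 1
  inj : ∀ d ∈ N.divisors, ∀ d' ∈ N.divisors, ∀ y,
    next d = some y → next d' = some y → d = d'
  low_step : ∀ d ∈ N.divisors, ∀ y, next d = some y → low y = low d
  top_sym : ∀ d ∈ N.divisors, next d = none → Ω d + low d = Ω N
  exists_prev : ∀ y ∈ N.divisors, low y ≠ Ω y → ∃ d ∈ N.divisors, next d = some y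
  low_le : ∀ d ∈ N.divisors, low d ≤ Ω d
  le_top : ∀ d ∈ N.divisors, Ω d + low d ≤ Ω N

theorem scd_exists : ∀ N : ℕ, 0 < N → Nonempty (Scd N) := by
  intro N
  induction N using Nat.strong_induction_on with
  | _ N ih =>
  intro hN
  rcases eq_or_lt_of_le (show 1 ≤ N from hN) with h1 | h2
  · -- N = 1
    subst h1
    exact ⟨⟨fun _ => none, fun _ => 0,
      by simp, by simp, by simp,
      by simp [Nat.divisors_one],
      by simp [Nat.divisors_one],
      by simp,
      by simp [Nat.divisors_one]⟩⟩
  · -- N ≥ 2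
    classical
    set p := N.minFac with hpdef
    have hp : p.Prime := Nat.minFac_prime (by omega)
    set a := N.factorization p with hadef
    set M := N / p ^ a with hMdef
    have hM0 : 0 < M := Nat.ordCompl_pos p (by omega)
    have hNe : p ^ a * M = N := Nat.ordProj_mul_ordCompl_eq_self N p
    have hpM : ¬ p ∣ M := Nat.not_dvd_ordCompl hp (by omega)
    have ha : 0 < a := hp.factorization_pos_of_dvd (by omega) (Nat.minFac_dvd N)
    have hMlt : M < N := Nat.div_lt_self hN (Nat.one_lt_pow (by omega) hp.one_lt)
    obtain ⟨G⟩ := ih M hMlt hM0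
    -- decomposition of divisors of N
    set t : ℕ → ℕ := fun d => d.factorization p with htdef
    set e : ℕ → ℕ := fun d => d / p ^ (d.factorization p) with hedef
    have hOmN : Ω N = Ω M + a := by
      rw [← hNe, cardFactors_mul (pow_ne_zero a hp.ne_zero) (by omega),
        cardFactors_apply_prime_pow hp]; ring
    -- key facts about products x * p ^ k
    have key : ∀ x k, x ∣ M → k ≤ a →
        t (x * p ^ k) = k ∧ e (x * p ^ k) = x ∧ x * p ^ k ∈ N.divisors := by
      intro x k hxM hk
      have hx0 : x ≠ 0 := by
        rintro rfl; exact absurd (zero_dvd_iff.mp hxM) (by omega)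
      have hpx : ¬ p ∣ x := fun h => hpM (h.trans hxM)
      have htv : t (x * p ^ k) = k := by
        simp only [htdef]
        rw [Nat.factorization_mul hx0 (pow_ne_zero k hp.ne_zero),
          hp.factorization_pow]
        simp [Nat.factorization_eq_zero_of_not_dvd hpx]
      refine ⟨htv, ?_, ?_⟩
      · simp only [hedef]
        have : (x * p ^ k).factorization p = k := htv
        rw [this, Nat.mul_div_cancel _ (pow_pos hp.pos k)]
      · rw [Nat.mem_divisors]
        constructor
        · rw [← hNe, mul_comm (p ^ a) M]
          exact mul_dvd_mul hxM (pow_dvd_pow p hk)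
        · omega
    -- facts about a divisor d of N
    have dec : ∀ d ∈ N.divisors, e d ∈ M.divisors ∧ t d ≤ a ∧ d = e d * p ^ t d ∧
        Ω d = Ω (e d) + t d := by
      intro d hd
      rw [Nat.mem_divisors] at hd
      obtain ⟨hdN, _⟩ := hd
      have hd0 : d ≠ 0 := by rintro rfl; exact absurd (zero_dvd_iff.mp hdN) (by omega)
      have hdecomp : p ^ t d * e d = d := Nat.ordProj_mul_ordCompl_eq_self d p
      have he0 : e d ≠ 0 := by
        intro h; rw [h, mul_zero] at hdecomp; exact hd0 hdecomp.symm
      have hpe : ¬ p ∣ e d := Nat.not_dvd_ordCompl hp hd0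
      have heM : e d ∣ M := by
        have hedvd : e d ∣ N := (Nat.ordCompl_dvd d p).trans hdN
        rw [← hNe] at hedvd
        exact Nat.Coprime.dvd_of_dvd_mul_left
          (Nat.Coprime.pow_right a ((hp.coprime_iff_not_dvd.mpr hpe).symm)) hedvd
      have hta : t d ≤ a := by
        have hle := (Nat.factorization_le_iff_dvd hd0 (by omega)).mpr hdN
        exact Finsupp.le_def.mp hle p
      refine ⟨Nat.mem_divisors.mpr ⟨heM, by omega⟩, hta,
        hdecomp.symm.trans (mul_comm _ _), ?_⟩
      have hOm : Ω (p ^ t d * e d) = Ω (e d) + t d := by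
        rw [cardFactors_mul (pow_ne_zero _ hp.ne_zero) he0,
          cardFactors_apply_prime_pow hp]; ring
      rw [hdecomp] at hOm; exact hOm
    -- the new successor and low functions
    set nx : ℕ → Option ℕ := fun d =>
      if Ω (e d) - G.low (e d) + t d < a then some (d * p)
      else (G.next (e d)).map (fun x => x * p ^ t d) with hnxdef
    set lw : ℕ → ℕ := fun d =>
      G.low (e d) + min (Ω (e d) - G.low (e d)) (a - t d) with hlwdef
    refine ⟨⟨nx, lw, ?_, ?_, ?_, ?_, ?_, ?_, ?_⟩⟩
    · -- step
      intro d hd y hy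
      obtain ⟨heM, hta, hdec, hOmd⟩ := dec d hd
      have heMd := (Nat.mem_divisors.mp heM).1
      simp only [hnxdef] at hy
      split_ifs at hy with hc
      · -- case A : y = d * p
        have hylt : t d + 1 ≤ a := by omega
        obtain ⟨_, _, hmem⟩ := key (e d) (t d + 1) heMd hylt
        have hyform : d * p = e d * p ^ (t d + 1) := by
          conv_lhs => rw [hdec]
          ring
        injection hy with hy'
        subst hy'
        refine ⟨by rw [hyform]; exact hmem, Dvd.intro p rfl, ?_⟩
        have hd0 : d ≠ 0 := (Nat.pos_of_mem_divisors hd).ne'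
        rw [cardFactors_mul hd0 hp.ne_zero, cardFactors_apply_prime hp]
      · -- case B : y = e' * p ^ t d
        rcases h' : G.next (e d) with _ | e'
        · rw [h'] at hy; simp at hy
        · rw [h'] at hy
          simp only [Option.map_some] at hy
          injection hy with hy'
          obtain ⟨he'M, hee', hOme'⟩ := G.step (e d) heM e' h'
          have he'Md := (Nat.mem_divisors.mp he'M).1
          obtain ⟨_, _, hmem⟩ := key e' (t d) he'Md hta
          subst hy'
          refine ⟨hmem, ?_, ?_⟩
          · conv_lhs => rw [hdec]
            exact mul_dvd_mul hee' dvd_rfl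
          · have he'0 : e' ≠ 0 := (Nat.pos_of_mem_divisors he'M).ne'
            rw [cardFactors_mul he'0 (pow_ne_zero _ hp.ne_zero),
              cardFactors_apply_prime_pow hp, hOme', hOmd]; ring
    · -- inj
      intro d hd d' hd' y hy hy'
      obtain ⟨heM, hta, hdec, hOmd⟩ := dec d hd
      obtain ⟨heM', hta', hdec', hOmd'⟩ := dec d' hd'
      have heMd := (Nat.mem_divisors.mp heM).1
      have heMd' := (Nat.mem_divisors.mp heM').1
      simp only [hnxdef] at hy hy'
      -- compute t y and e y in all four combinations
      split_ifs at hy hy' with hc hc'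
      · -- A A
        injection hy with h1; injection hy' with h2
        have := h1.trans h2.symm
        exact Nat.eq_of_mul_eq_mul_right hp.pos this
      · -- d case A, d' case B
        exfalso
        rcases h' : G.next (e d') with _ | e'
        · rw [h'] at hy'; simp at hy'
        · rw [h'] at hy'
          simp only [Option.map_some] at hy'
          injection hy with h1; injection hy' with h2
          obtain ⟨he'M, hee', hOme'⟩ := G.step (e d') heM' e' h'
          have he'Md := (Nat.mem_divisors.mp he'M).1
          -- y = d * p = e d * p ^ (t d + 1), and y = e' * p ^ t d'
          have hyform : d * p = e d * p ^ (t d + 1) := by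
            conv_lhs => rw [hdec]
            ring
          obtain ⟨ht1, he1, _⟩ := key (e d) (t d + 1) heMd (by omega)
          obtain ⟨ht2, he2, _⟩ := key e' (t d') he'Md hta'
          have hyy : e d * p ^ (t d + 1) = e' * p ^ t d' := by
            rw [← hyform, h1, ← h2]
          have htt : t d + 1 = t d' := by rw [← ht1, hyy, ht2]
          have hee : e d = e' := by rw [← he1, hyy, he2]
          -- now derive the contradiction from ranks/lows
          have hlowe : G.low e' = G.low (e d') := G.low_step (e d') heM' e' h'
          have hl1 := G.low_le (e d) heM
          have hl2 := G.low_le (e d') heM'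
          rw [← hee] at hOme' hlowe
          omega
      · -- d case B, d' case A (symmetric)
        exfalso
        rcases h' : G.next (e d) with _ | e'
        · rw [h'] at hy; simp at hy
        · rw [h'] at hy
          simp only [Option.map_some] at hy
          injection hy with h1; injection hy' with h2
          obtain ⟨he'M, hee', hOme'⟩ := G.step (e d) heM e' h'
          have he'Md := (Nat.mem_divisors.mp he'M).1
          have hyform : d' * p = e d' * p ^ (t d' + 1) := by
            conv_lhs => rw [hdec']
            ring
          obtain ⟨ht1, he1, _⟩ := key (e d') (t d' + 1) heMd' (by omega)
          obtain ⟨ht2, he2, _⟩ := key e' (t d) he'Md hta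
          have hyy : e d' * p ^ (t d' + 1) = e' * p ^ t d := by
            rw [← hyform, h2, ← h1]
          have htt : t d' + 1 = t d := by rw [← ht1, hyy, ht2]
          have hee : e d' = e' := by rw [← he1, hyy, he2]
          have hlowe : G.low e' = G.low (e d) := G.low_step (e d) heM e' h'
          have hl1 := G.low_le (e d) heM
          have hl2 := G.low_le (e d') heM'
          rw [← hee] at hOme' hlowe
          omega
      · -- B B
        rcases h1 : G.next (e d) with _ | e1
        · rw [h1] at hy; simp at hy
        rcases h2 : G.next (e d') with _ | e2
        · rw [h2] at hy'; simp at hy'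
        rw [h1] at hy; rw [h2] at hy'
        simp only [Option.map_some] at hy hy'
        injection hy with hy1; injection hy' with hy2
        obtain ⟨he1M, _, _⟩ := G.step (e d) heM e1 h1
        obtain ⟨he2M, _, _⟩ := G.step (e d') heM' e2 h2
        have he1Md := (Nat.mem_divisors.mp he1M).1
        have he2Md := (Nat.mem_divisors.mp he2M).1
        obtain ⟨ht1, he1e, _⟩ := key e1 (t d) he1Md hta
        obtain ⟨ht2, he2e, _⟩ := key e2 (t d') he2Md hta'
        have hyy : e1 * p ^ t d = e2 * p ^ t d' := by rw [hy1, ← hy2]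
        have htt : t d = t d' := by rw [← ht1, hyy, ht2]
        have hee : e1 = e2 := by rw [← he1e, hyy, he2e]
        subst hee
        have heq := G.inj (e d) heM (e d') heM' e1 h1 h2
        conv_lhs => rw [hdec]
        conv_rhs => rw [hdec']
        rw [heq, htt]
    · -- low_step
      intro d hd y hy
      obtain ⟨heM, hta, hdec, hOmd⟩ := dec d hd
      have heMd := (Nat.mem_divisors.mp heM).1
      have hl1 := G.low_le (e d) heM
      simp only [hnxdef] at hy
      split_ifs at hy with hc
      · injection hy with hy'
        have hyform : d * p = e d * p ^ (t d + 1) := by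
          conv_lhs => rw [hdec]
          ring
        obtain ⟨ht1, he1, _⟩ := key (e d) (t d + 1) heMd (by omega)
        subst hy'
        simp only [hlwdef]
        rw [hyform, ht1, he1]
        omega
      · rcases h' : G.next (e d) with _ | e'
        · rw [h'] at hy; simp at hy
        · rw [h'] at hy
          simp only [Option.map_some] at hy
          injection hy with hy'
          obtain ⟨he'M, hee', hOme'⟩ := G.step (e d) heM e' h'
          have he'Md := (Nat.mem_divisors.mp he'M).1
          obtain ⟨ht1, he1, _⟩ := key e' (t d) he'Md hta
          have hlowe : G.low e' = G.low (e d) := G.low_step (e d) heM e' h'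
          have hl2 := G.low_le e' he'M
          subst hy'
          simp only [hlwdef]
          rw [ht1, he1]
          omega
    · -- top_sym
      intro d hd hnone
      obtain ⟨heM, hta, hdec, hOmd⟩ := dec d hd
      have hl1 := G.low_le (e d) heM
      simp only [hnxdef] at hnone
      split_ifs at hnone with hc
      rcases h' : G.next (e d) with _ | e'
      · have htop := G.top_sym (e d) heM h'
        simp only [hlwdef]
        omega
      · rw [h'] at hnone; simp at hnone
    · -- exists_prev
      intro y hy hne
      obtain ⟨heM, hta, hdec, hOmd⟩ := dec y hy
      have heMd := (Nat.mem_divisors.mp heM).1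
      have hl1 := G.low_le (e y) heM
      simp only [hlwdef] at hne
      by_cases hcase : Ω (e y) - G.low (e y) + t y ≤ a
      · -- vertical predecessor : d = e y * p ^ (t y - 1)
        have hty : 0 < t y := by omega
        obtain ⟨ht1, he1, hmem⟩ := key (e y) (t y - 1) heMd (by omega)
        refine ⟨e y * p ^ (t y - 1), hmem, ?_⟩
        simp only [hnxdef, ht1, he1]
        rw [if_pos (by omega)]
        have hty1 : t y - 1 + 1 = t y := by omega
        have : e y * p ^ (t y - 1) * p = y := by
          conv_rhs => rw [hdec]
          rw [mul_assoc, ← pow_succ, hty1]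
        rw [this]
      · -- horizontal predecessor
        have hsy : G.low (e y) ≠ Ω (e y) := by omega
        obtain ⟨x, hxM, hx⟩ := G.exists_prev (e y) heM hsy
        have hxMd := (Nat.mem_divisors.mp hxM).1
        obtain ⟨hxeM, hxe, hOmx⟩ := G.step x hxM (e y) hx
        have hlowx : G.low (e y) = G.low x := G.low_step x hxM (e y) hx
        obtain ⟨ht1, he1, hmem⟩ := key x (t y) hxMd hta
        refine ⟨x * p ^ t y, hmem, ?_⟩
        have hlx := G.low_le x hxM
        simp only [hnxdef, ht1, he1]
        rw [if_neg (by omega), hx]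
        simp only [Option.map_some]
        rw [← hdec]
    · -- low_le
      intro d hd
      obtain ⟨heM, hta, hdec, hOmd⟩ := dec d hd
      have hl1 := G.low_le (e d) heM
      simp only [hlwdef]
      omega
    · -- le_top
      intro d hd
      obtain ⟨heM, hta, hdec, hOmd⟩ := dec d hd
      have hl1 := G.low_le (e d) heM
      have hl2 := G.le_top (e d) heM
      simp only [hlwdef]
      omega

/-- **Normalized matching property of the divisor lattice.** If `|P_j| ≤ |P_{j+1}|`, then for
every subset `S ⊆ P_j` one has `|S| ≤ |N(S)|`. -/
theorem divisorLattice_matching (N : ℕ) (hN : 0 < N) (j : ℕ)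
    (hcard : (divisorLevel N j).card ≤ (divisorLevel N (j + 1)).card)
    (S : Finset ℕ) (hS : S ⊆ divisorLevel N j) :
    S.card ≤ (divisorNeighbor N j S).card := by
  classical
  obtain ⟨G⟩ := scd_exists N hN
  have hlvl : ∀ k, ∀ d, d ∈ divisorLevel N k ↔ d ∈ N.divisors ∧ Ω d = k := by
    intro k d
    simp [divisorLevel, cardFactors_apply]
  -- every element of level j has a successor
  have htop : ∀ x ∈ divisorLevel N j, ∃ y, G.next x = some y := by
    by_contra hcon
    push_neg at hcon
    obtain ⟨x₀, hx₀, hx₀none⟩ := hcon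
    have hx₀none' : G.next x₀ = none := by
      rcases h : G.next x₀ with _ | y
      · rfl
      · exact absurd h (hx₀none y)
    obtain ⟨hx₀div, hx₀om⟩ := (hlvl j x₀).mp hx₀
    have hsym := G.top_sym x₀ hx₀div hx₀none'
    have hll := G.low_le x₀ hx₀div
    -- hence Ω N ≤ 2 j; so every element of level j+1 has a predecessor
    have hprev : ∀ y ∈ divisorLevel N (j+1), ∃ d ∈ N.divisors, G.next d = some y := by
      intro y hy
      obtain ⟨hydiv, hyom⟩ := (hlvl (j+1) y).mp hy
      by_contra hnoprev
      have hlowy : G.low y = Ω y := by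
        by_contra hne
        exact hnoprev (G.exists_prev y hydiv hne)
      have := G.le_top y hydiv
      omega
    -- the predecessor map is injective from level (j+1) into (level j).erase x₀
    set f : ℕ → ℕ := fun y =>
      if h : ∃ d ∈ N.divisors, G.next d = some y then h.choose else 0 with hfdef
    have hfspec : ∀ y ∈ divisorLevel N (j+1),
        f y ∈ N.divisors ∧ G.next (f y) = some y := by
      intro y hy
      have h := hprev y hy
      simp only [hfdef, dif_pos h]
      exact h.choose_spec
    have hmaps : ∀ y ∈ divisorLevel N (j+1), f y ∈ (divisorLevel N j).erase x₀ := by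
      intro y hy
      obtain ⟨hfd, hfn⟩ := hfspec y hy
      obtain ⟨hydiv, hyom⟩ := (hlvl (j+1) y).mp hy
      obtain ⟨_, _, homstep⟩ := G.step (f y) hfd y hfn
      refine Finset.mem_erase.mpr ⟨?_, (hlvl j (f y)).mpr ⟨hfd, by omega⟩⟩
      intro hcontra
      rw [hcontra, hx₀none'] at hfn
      exact Option.some_ne_none y hfn.symm
    have hinj : Set.InjOn f (divisorLevel N (j+1)) := by
      intro y1 hy1 y2 hy2 heq
      obtain ⟨hfd1, hfn1⟩ := hfspec y1 hy1
      obtain ⟨hfd2, hfn2⟩ := hfspec y2 hy2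
      rw [heq] at hfn1
      rw [hfn1] at hfn2
      exact (Option.some_inj.mp hfn2)
    have hcard2 := Finset.card_le_card_of_injOn f hmaps hinj
    have hcard3 : ((divisorLevel N j).erase x₀).card = (divisorLevel N j).card - 1 :=
      Finset.card_erase_of_mem hx₀
    have hpos : 0 < (divisorLevel N j).card := Finset.card_pos.mpr ⟨x₀, hx₀⟩
    omega
  -- the successor map injects S into its neighborhood
  set g : ℕ → ℕ := fun x => (G.next x).getD 0 with hgdef
  have hmaps : ∀ x ∈ S, g x ∈ divisorNeighbor N j S := by
    intro x hx
    have hxA := hS hx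
    obtain ⟨hxdiv, hxom⟩ := (hlvl j x).mp hxA
    obtain ⟨y, hy⟩ := htop x hxA
    obtain ⟨hydiv, hdvd, hom⟩ := G.step x hxdiv y hy
    simp only [hgdef, hy, Option.getD_some]
    refine Finset.mem_filter.mpr ⟨(hlvl (j+1) y).mpr ⟨hydiv, by omega⟩, x, hx, hdvd⟩
  have hinj : Set.InjOn g S := by
    intro x1 hx1 x2 hx2 heq
    have h1A := hS hx1
    have h2A := hS hx2
    obtain ⟨y1, hy1⟩ := htop x1 h1A
    obtain ⟨y2, hy2⟩ := htop x2 h2A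
    have hd1 := ((hlvl j x1).mp h1A).1
    have hd2 := ((hlvl j x2).mp h2A).1
    simp only [hgdef, hy1, hy2, Option.getD_some] at heq
    subst heq
    exact G.inj x1 hd1 x2 hd2 y1 hy1 hy2
  exact Finset.card_le_card_of_injOn g hmaps hinj
end

section
/- Let A = ⊕_{i=0}^c A_i be a graded Artinian Gorenstein algebra over a field K = A_0 with unimodal Hilbert function which has the matching property, and let m = ⊕_{i≥1} A_i. Let I = ⊕_{j≥α} I_j be a graded ideal of A with initial degree α (so I_α ≠ 0), and put I' = ⊕_{j≥α+1} I_j. Let j_0 = min{j : dim_K A_j > dim_K A_{j+1}} and assume α < j_0. Then μ(I) ≤ μ(I'); in particular, if μ(I) equals the Dilworth number d(A), then so does μ(I'). -/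
open Module

/-- `μ(I) = dim_K I/mI`, the minimal number of generators of an ideal `I` of a graded algebra
`A` over `K` with graded maximal ideal `m`. -/
noncomputable def nu (K : Type*) {A : Type*} [Field K] [CommRing A] [Algebra K A]
    (m I : Ideal A) : ℕ :=
  finrank K
    (↥(I.restrictScalars K) ⧸
      (Submodule.comap (I.restrictScalars K).subtype ((m * I).restrictScalars K)))

/-- For subspaces `W, V` of a `K`-algebra `A`, the `K`-span of `{x * v : x ∈ W, v ∈ V}`. -/
noncomputable def mulSpan {K A : Type*} [Field K] [CommRing A] [Algebra K A]
    (W V : Submodule K A) : Submodule K A :=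
  Submodule.span K {z | ∃ x ∈ W, ∃ v ∈ V, z = x * v}

section Aux

variable {K A : Type*} [Field K] [CommRing A] [Algebra K A]
  (𝒜 : ℕ → Submodule K A) [GradedAlgebra 𝒜]

/-- The K-submodule of elements of degrees ≥ n. -/
noncomputable def pdeg (n : ℕ) : Submodule K A := ⨆ j, ⨆ (_ : n ≤ j), 𝒜 j

lemma le_pdeg {n j : ℕ} (h : n ≤ j) : 𝒜 j ≤ pdeg 𝒜 n :=
  le_iSup₂ (f := fun j (_ : n ≤ j) => 𝒜 j) j h

lemma pdeg_zero : pdeg 𝒜 0 = ⊤ := by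
  refine le_antisymm le_top ?_
  rw [← (DirectSum.Decomposition.isInternal 𝒜).submodule_iSup_eq_top]
  exact iSup_le fun j => le_pdeg 𝒜 (Nat.zero_le j)

lemma pdeg_mul_le (a b : ℕ) : pdeg 𝒜 a * pdeg 𝒜 b ≤ pdeg 𝒜 (a + b) := by
  unfold pdeg
  rw [Submodule.iSup_mul]
  refine iSup_le fun i => ?_
  rw [Submodule.iSup_mul]
  refine iSup_le fun hi => ?_
  rw [Submodule.mul_iSup]
  refine iSup_le fun j => ?_
  rw [Submodule.mul_iSup]
  refine iSup_le fun hj => ?_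
  refine Submodule.mul_le.mpr fun x hx y hy => ?_
  exact le_iSup₂ (f := fun k (_ : a + b ≤ k) => 𝒜 k) (i + j) (by omega)
    (SetLike.mul_mem_graded hx hy)

lemma disjoint_pdeg (n : ℕ) : Disjoint (𝒜 n) (pdeg 𝒜 (n + 1)) := by
  have h := (DirectSum.Decomposition.isInternal 𝒜).submodule_iSupIndep (i := n)
  refine h.mono_right ?_
  refine iSup₂_le fun j hj => ?_
  exact le_iSup₂ (f := fun j (_ : j ≠ n) => 𝒜 j) j (by omega)

/-- Promote a K-submodule closed under A-multiplication to an ideal. -/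
noncomputable def toIdealA (q : Submodule K A) (h : ∀ a : A, ∀ x ∈ q, a * x ∈ q) : Ideal A where
  carrier := q
  add_mem' := fun ha hb => q.add_mem ha hb
  zero_mem' := q.zero_mem
  smul_mem' := fun a x hx => by simpa [smul_eq_mul] using h a x hx

lemma pdeg_absorb (n : ℕ) : ∀ a : A, ∀ x ∈ pdeg 𝒜 n, a * x ∈ pdeg 𝒜 n := by
  intro a x hx
  have ha : a ∈ pdeg 𝒜 0 := by rw [pdeg_zero]; trivial
  have := pdeg_mul_le 𝒜 0 n (Submodule.mul_mem_mul ha hx)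
  simpa using this

lemma irrelevant_le_pdeg_one {x : A}
    (hx : x ∈ (HomogeneousIdeal.irrelevant 𝒜).toIdeal) : x ∈ pdeg 𝒜 1 := by
  have h0 : (DirectSum.decompose 𝒜 x 0 : A) = 0 := hx
  classical
  rw [← DirectSum.sum_support_decompose 𝒜 x]
  refine Submodule.sum_mem _ fun i hi => ?_
  rcases Nat.eq_zero_or_pos i with h | h
  · subst h; rw [h0]; exact Submodule.zero_mem _
  · exact le_pdeg 𝒜 h (SetLike.coe_mem _)

lemma nu_eq {K A : Type*} [Field K] [CommRing A] [Algebra K A] [FiniteDimensional K A]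
    (m I : Ideal A) (h : m * I ≤ I) :
    nu K m I = finrank K (I.restrictScalars K) - finrank K ((m * I).restrictScalars K) := by
  have hle : (m * I).restrictScalars K ≤ I.restrictScalars K := h
  have e := Submodule.finrank_quotient_add_finrank
    (Submodule.comap (I.restrictScalars K).subtype ((m * I).restrictScalars K))
  have e2 : finrank K (Submodule.comap (I.restrictScalars K).subtype
      ((m * I).restrictScalars K)) = finrank K ((m * I).restrictScalars K) :=
    LinearEquiv.finrank_eq (Submodule.comapSubtypeEquivOfLe hle)
  unfold nu
  omega

end Aux

/-- **Truncation does not decrease the number of generators below the peak.**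
Let `A = ⊕_{i=0}^c A_i` be a graded Artinian Gorenstein algebra over `K = A_0` with unimodal
Hilbert function and the matching property.  Let `I` be a graded ideal with initial degree
`α`, and let `I' = ⊕_{j ≥ α+1} I_j` be its truncation.  If
`α < j₀ = min{j : dim_K A_j > dim_K A_{j+1}}`, then `μ(I) ≤ μ(I')`; in particular if
`μ(I)` equals the Dilworth number `d(A)` then so does `μ(I')`. -/
theorem truncation_sublemma {K A : Type*} [Field K] [CommRing A] [Algebra K A]
    (𝒜 : ℕ → Submodule K A) [GradedAlgebra 𝒜]
    (c : ℕ) (htop : ∀ i, c < i → 𝒜 i = ⊥) [FiniteDimensional K A]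
    (hA0 : 𝒜 0 = (1 : Submodule K A))
    (hGor : finrank K
      (((⊥ : Ideal A).colon (HomogeneousIdeal.irrelevant 𝒜).toIdeal).restrictScalars K) = 1)
    (hunimodal : ∃ p : ℕ,
      (∀ i j, i ≤ j → j ≤ p → finrank K (𝒜 i) ≤ finrank K (𝒜 j)) ∧
      (∀ i j, p ≤ i → i ≤ j → finrank K (𝒜 j) ≤ finrank K (𝒜 i)))
    (hmatching : ∀ j : ℕ, finrank K (𝒜 j) ≤ finrank K (𝒜 (j + 1)) →
      ∀ V : Submodule K A, V ≤ 𝒜 j → finrank K V ≤ finrank K (mulSpan (𝒜 1) V))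
    (I : Ideal A) (hIhom : I.IsHomogeneous 𝒜)
    (α : ℕ) (hinit : I.restrictScalars K ⊓ 𝒜 α ≠ ⊥)
    (hbelow : ∀ j < α, I.restrictScalars K ⊓ 𝒜 j = ⊥)
    (I' : Ideal A)
    (hI' : I' = Ideal.span {x | ∃ j, α + 1 ≤ j ∧ x ∈ I ∧ x ∈ 𝒜 j})
    (j₀ : ℕ) (hj₀ : IsLeast {j : ℕ | finrank K (𝒜 (j + 1)) < finrank K (𝒜 j)} j₀)
    (hα : α < j₀)
    (d : ℕ)
    (hd : IsGreatest {e : ℕ | ∃ J : Ideal A,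
      nu K (HomogeneousIdeal.irrelevant 𝒜).toIdeal J = e} d) :
    nu K (HomogeneousIdeal.irrelevant 𝒜).toIdeal I ≤
      nu K (HomogeneousIdeal.irrelevant 𝒜).toIdeal I' ∧
    (nu K (HomogeneousIdeal.irrelevant 𝒜).toIdeal I = d →
      nu K (HomogeneousIdeal.irrelevant 𝒜).toIdeal I' = d) := by
  classical
  set m : Ideal A := (HomogeneousIdeal.irrelevant 𝒜).toIdeal with hm
  set Iα : Submodule K A := I.restrictScalars K ⊓ 𝒜 α with hIα
  set S : Submodule K A := mulSpan (𝒜 1) Iα with hS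
  -- I' ≤ I
  have hI'leI : I' ≤ I := by
    rw [hI']
    refine Ideal.span_le.mpr fun x hx => ?_
    obtain ⟨j, hj, hxI, hxj⟩ := hx
    exact hxI
  -- I' lives in degrees ≥ α + 1
  have hJ' : I'.restrictScalars K ≤ pdeg 𝒜 (α + 1) := by
    intro x hx
    have h : I' ≤ toIdealA (pdeg 𝒜 (α + 1)) (pdeg_absorb 𝒜 _) := by
      rw [hI']
      refine Ideal.span_le.mpr fun y hy => ?_
      obtain ⟨j, hj, hyI, hyj⟩ := hy
      exact le_pdeg 𝒜 hj hyj
    exact h hx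
  -- m * I' lives in degrees ≥ α + 2
  have hMI' : ((m * I').restrictScalars K : Submodule K A) ≤ pdeg 𝒜 (α + 2) := by
    intro x hx
    have h : m * I' ≤ toIdealA (pdeg 𝒜 (α + 2)) (pdeg_absorb 𝒜 _) := by
      refine Ideal.mul_le.mpr fun r hr s hs => ?_
      have h1 : r ∈ pdeg 𝒜 1 := irrelevant_le_pdeg_one 𝒜 hr
      have h2 : s ∈ pdeg 𝒜 (α + 1) := hJ' hs
      have h3 := pdeg_mul_le 𝒜 1 (α + 1) (Submodule.mul_mem_mul h1 h2)
      have h4 : (1 : ℕ) + (α + 1) = α + 2 := by omega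
      rw [h4] at h3
      exact h3
    exact h hx
  -- S lives in degree α + 1
  have hSle : S ≤ 𝒜 (α + 1) := by
    rw [hS, mulSpan]
    refine Submodule.span_le.mpr ?_
    rintro z ⟨x, hx, v, hv, rfl⟩
    have := SetLike.mul_mem_graded hx (hv.2 : v ∈ 𝒜 α)
    simpa [add_comm] using this
  -- S ≤ m * I
  have hSM : S ≤ (m * I).restrictScalars K := by
    rw [hS, mulSpan]
    refine Submodule.span_le.mpr ?_
    rintro z ⟨x, hx, v, hv, rfl⟩
    have hxm : x ∈ m := by
      show (DirectSum.decompose 𝒜 x 0 : A) = 0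
      exact DirectSum.decompose_of_mem_ne 𝒜 hx one_ne_zero
    exact Ideal.mul_mem_mul hxm hv.1
  -- decomposition of I
  have hJle : I.restrictScalars K ≤ Iα ⊔ I'.restrictScalars K := by
    intro x hx
    rw [← DirectSum.sum_support_decompose 𝒜 x]
    refine Submodule.sum_mem _ fun i hi => ?_
    have hxi : (DirectSum.decompose 𝒜 x i : A) ∈ I := hIhom i hx
    rcases lt_trichotomy i α with h | h | h
    · have hmem : (DirectSum.decompose 𝒜 x i : A) ∈ I.restrictScalars K ⊓ 𝒜 i :=
        ⟨hxi, SetLike.coe_mem _⟩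
      rw [hbelow i h] at hmem
      rw [Submodule.mem_bot] at hmem
      rw [hmem]
      exact Submodule.zero_mem _
    · subst h
      exact Submodule.mem_sup_left ⟨hxi, SetLike.coe_mem _⟩
    · refine Submodule.mem_sup_right ?_
      show (DirectSum.decompose 𝒜 x i : A) ∈ I'
      rw [hI']
      exact Ideal.subset_span ⟨i, by omega, hxi, SetLike.coe_mem _⟩
  -- disjointness
  have hdis1 : Disjoint Iα (I'.restrictScalars K) :=
    Disjoint.mono inf_le_right hJ' (disjoint_pdeg 𝒜 α)
  have hdis2 : Disjoint S ((m * I').restrictScalars K) :=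
    Disjoint.mono hSle hMI' (disjoint_pdeg 𝒜 (α + 1))
  -- finrank identities
  have hfJ : finrank K (I.restrictScalars K) =
      finrank K Iα + finrank K (I'.restrictScalars K) := by
    have hsup : Iα ⊔ I'.restrictScalars K = I.restrictScalars K := by
      refine le_antisymm (sup_le inf_le_left ?_) hJle
      exact fun x hx => hI'leI hx
    have h := Submodule.finrank_sup_add_finrank_inf_eq Iα (I'.restrictScalars K)
    rw [hsup, hdis1.eq_bot] at h
    simpa using h
  have hfM : finrank K ((m * I').restrictScalars K) + finrank K S ≤
      finrank K ((m * I).restrictScalars K) := by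
    have hle : S ⊔ (m * I').restrictScalars K ≤ (m * I).restrictScalars K :=
      sup_le hSM (fun x hx => Ideal.mul_mono_right hI'leI hx)
    have h := Submodule.finrank_sup_add_finrank_inf_eq S ((m * I').restrictScalars K)
    rw [hdis2.eq_bot] at h
    have h2 := Submodule.finrank_mono hle
    simp only [finrank_bot] at h
    omega
  -- matching
  have hmono : finrank K (𝒜 α) ≤ finrank K (𝒜 (α + 1)) := by
    by_contra h
    have : j₀ ≤ α := hj₀.2 (by simpa using Nat.lt_of_not_le h)
    omega
  have hmatch : finrank K Iα ≤ finrank K S := hmatching α hmono Iα inf_le_right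
  -- nu computations
  have hnuI : nu K m I =
      finrank K (I.restrictScalars K) - finrank K ((m * I).restrictScalars K) :=
    nu_eq m I Ideal.mul_le_right
  have hnuI' : nu K m I' =
      finrank K (I'.restrictScalars K) - finrank K ((m * I').restrictScalars K) :=
    nu_eq m I' Ideal.mul_le_right
  have hMleJ : finrank K ((m * I).restrictScalars K) ≤ finrank K (I.restrictScalars K) :=
    Submodule.finrank_mono (fun x hx => (Ideal.mul_le_right : m * I ≤ I) hx)
  have hMleJ' : finrank K ((m * I').restrictScalars K) ≤ finrank K (I'.restrictScalars K) :=
    Submodule.finrank_mono (fun x hx => (Ideal.mul_le_right : m * I' ≤ I') hx)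
  have key : nu K m I ≤ nu K m I' := by omega
  refine ⟨key, fun hdI => ?_⟩
  have h1 : nu K m I' ≤ d := hd.2 ⟨I', rfl⟩
  omega
end

section
/- Let K be a field, R = K[x_1,...,x_n], and B = R/(x_1^{a_1},...,x_n^{a_n}) with a_1,...,a_n positive integers, with its standard grading. Let J ⊆ B be an ideal generated by monomials (images of monomials of R). If j is an index with dim_K B_j ≤ dim_K B_{j+1}, then H(J, j) ≤ H(J, j+1), where H(J, i) = dim_K J_i is the Hilbert function of the graded ideal J. -/
open MvPolynomial Module

set_option synthInstance.maxHeartbeats 400000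

/-- The degree-`i` homogeneous component of the standard graded quotient `R/b` of the
polynomial ring `R = K[x_1,…,x_n]` by an ideal `b`: the image of the space of homogeneous
polynomials of degree `i`.  Its dimension is the value `H(R/b, i)` of the Hilbert function. -/
noncomputable def gradedPiece {K : Type*} [Field K] {n : ℕ}
    (b : Ideal (MvPolynomial (Fin n) K)) (i : ℕ) :
    Submodule K (MvPolynomial (Fin n) K ⧸ b) :=
  (homogeneousSubmodule (Fin n) K i).map (Ideal.Quotient.mkₐ K b).toLinearMap

/-- An ideal of `B = R/a` is a monomial ideal if it is generated by images of monomials. -/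
def IsMonomialIdealOfQuotient {K : Type*} [Field K] {n : ℕ}
    (a : Ideal (MvPolynomial (Fin n) K)) (J : Ideal (MvPolynomial (Fin n) K ⧸ a)) : Prop :=
  ∃ M : Set (MvPolynomial (Fin n) K),
    (∀ p ∈ M, ∃ s : Fin n →₀ ℕ, p = monomial s (1 : K)) ∧
    J = Ideal.span ((Ideal.Quotient.mk a) '' M)

set_option maxHeartbeats 1600000
namespace MonCI


/-- The box of exponent vectors `b` with `b i < a i`. -/
def Cbox (n : ℕ) (a : Fin n → ℕ) : Finset (Fin n → ℕ) :=
  Fintype.piFinset fun i => Finset.range (a i)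

def cdeg {n : ℕ} (b : Fin n → ℕ) : ℕ := ∑ i, b i

lemma mem_Cbox {n : ℕ} {a : Fin n → ℕ} {b : Fin n → ℕ} :
    b ∈ Cbox n a ↔ ∀ i, b i < a i := by
  simp [Cbox, Fintype.mem_piFinset]

/-- Arithmetic of hooks in a grid: every admissible rank is attained on the hook. -/
lemma hook_exists (q m₀ r u v t : ℕ) (hum : u + r + r ≤ m₀) (hv : v ≤ q)
    (ht1 : r + min u (q - v) ≤ t) (ht2 : t + (r + min u (q - v)) ≤ m₀ + q) :
    ∃ u' v', r + u' + v' = t ∧ v' ≤ q ∧ min u' (q - v') = min u (q - v) ∧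
      u' + r + r ≤ m₀ := by
  by_cases hcase : t - r ≤ q
  · exact ⟨min u (q - v), t - r - min u (q - v), by omega, by omega, by omega, by omega⟩
  · exact ⟨min u (q - v) + (t - r - q), q - min u (q - v), by omega, by omega, by omega,
      by omega⟩

/-- Existence of a symmetric chain decomposition of the box, in functional form:
`idx` assigns each box element to a chain, `st` gives the starting rank of each chain;
chains are symmetric (ranks `st k` up to `m - st k`), saturated, and are chains in the
componentwise order. -/
theorem exists_scd (n : ℕ) (a : Fin n → ℕ) :
    ∃ (idx : (Fin n → ℕ) → ℕ) (st : ℕ → ℕ),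
      (∀ b ∈ Cbox n a, st (idx b) ≤ cdeg b ∧ cdeg b + st (idx b) ≤ ∑ i, (a i - 1)) ∧
      (∀ b ∈ Cbox n a, ∀ b' ∈ Cbox n a, idx b = idx b' → cdeg b = cdeg b' → b = b') ∧
      (∀ b ∈ Cbox n a, ∀ b' ∈ Cbox n a, idx b = idx b' → cdeg b ≤ cdeg b' → ∀ i, b i ≤ b' i) ∧
      (∀ b ∈ Cbox n a, ∀ t, st (idx b) ≤ t → t + st (idx b) ≤ ∑ i, (a i - 1) →
        ∃ b' ∈ Cbox n a, idx b' = idx b ∧ cdeg b' = t) := by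
  induction n with
  | zero =>
      refine ⟨fun _ => 0, fun _ => 0, ?_, ?_, ?_, ?_⟩
      · intro b _; simp [cdeg]
      · intro b _ b' _ _ _; ext i; exact absurd i.2 (Nat.not_lt_zero _)
      · intro b _ b' _ _ _ i; exact absurd i.2 (Nat.not_lt_zero _)
      · intro b hb t ht1 ht2
        refine ⟨b, hb, rfl, ?_⟩
        simp only [Finset.univ_eq_empty, Finset.sum_empty] at ht2 ⊢
        simp only [cdeg, Finset.univ_eq_empty, Finset.sum_empty]
        omega
  | succ n ih =>
      obtain ⟨idx₀, st₀, H1, H2, H3, H4⟩ := ih (fun i => a i.castSucc)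
      have hm : (∑ i : Fin (n+1), (a i - 1)) =
          (∑ i : Fin n, (a i.castSucc - 1)) + (a (Fin.last n) - 1) := by
        rw [Fin.sum_univ_castSucc]
      have memsplit : ∀ {b : Fin (n+1) → ℕ}, b ∈ Cbox (n+1) a →
          (Fin.init b ∈ Cbox n (fun i => a i.castSucc) ∧ b (Fin.last n) < a (Fin.last n)) := by
        intro b hb
        rw [mem_Cbox] at hb
        exact ⟨mem_Cbox.mpr fun i => hb i.castSucc, hb _⟩
      have degsplit : ∀ b : Fin (n+1) → ℕ, cdeg b = cdeg (Fin.init b) + b (Fin.last n) := by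
        intro b; rw [cdeg, Fin.sum_univ_castSucc]; rfl
      refine ⟨fun b => Nat.pair (idx₀ (Fin.init b))
          (min (cdeg (Fin.init b) - st₀ (idx₀ (Fin.init b)))
            ((a (Fin.last n) - 1) - b (Fin.last n))),
        fun K => st₀ K.unpair.1 + K.unpair.2, ?_, ?_, ?_, ?_⟩
      · -- (1) rank bounds
        intro b hb
        obtain ⟨hb₀, hbl⟩ := memsplit hb
        obtain ⟨h1a, h1b⟩ := H1 _ hb₀
        simp only [Nat.unpair_pair]
        rw [degsplit b, hm]
        omega
      · -- (2) same chain, same rank → equal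
        intro b hb b' hb' hidx hdeg
        obtain ⟨hb₀, hbl⟩ := memsplit hb
        obtain ⟨hb'₀, hb'l⟩ := memsplit hb'
        rw [Nat.pair_eq_pair] at hidx
        obtain ⟨hk, hi⟩ := hidx
        obtain ⟨h1a, h1b⟩ := H1 _ hb₀
        obtain ⟨h1a', h1b'⟩ := H1 _ hb'₀
        rw [degsplit, degsplit] at hdeg
        rw [hk] at h1a h1b hi
        have key : cdeg (Fin.init b) = cdeg (Fin.init b') ∧
            b (Fin.last n) = b' (Fin.last n) := by omega
        have e0 : Fin.init b = Fin.init b' := H2 _ hb₀ _ hb'₀ hk key.1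
        funext i
        refine Fin.lastCases ?_ ?_ i
        · exact key.2
        · intro j; exact congrFun e0 j
      · -- (3) chains are chains in the componentwise order
        intro b hb b' hb' hidx hdeg
        obtain ⟨hb₀, hbl⟩ := memsplit hb
        obtain ⟨hb'₀, hb'l⟩ := memsplit hb'
        rw [Nat.pair_eq_pair] at hidx
        obtain ⟨hk, hi⟩ := hidx
        obtain ⟨h1a, h1b⟩ := H1 _ hb₀
        obtain ⟨h1a', h1b'⟩ := H1 _ hb'₀
        rw [degsplit, degsplit] at hdeg
        rw [hk] at h1a h1b hi
        have key : cdeg (Fin.init b) ≤ cdeg (Fin.init b') ∧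
            b (Fin.last n) ≤ b' (Fin.last n) := by omega
        have e0 := H3 _ hb₀ _ hb'₀ hk key.1
        intro i
        refine Fin.lastCases ?_ ?_ i
        · exact key.2
        · intro j; exact e0 j
      · -- (4') saturation
        intro b hb t ht1 ht2
        obtain ⟨hb₀, hbl⟩ := memsplit hb
        obtain ⟨h1a, h1b⟩ := H1 _ hb₀
        simp only [Nat.unpair_pair] at ht1 ht2
        rw [hm] at ht2
        obtain ⟨u', v', hgp, hv'q, hhook, hu'⟩ :=
          hook_exists (a (Fin.last n) - 1) (∑ i : Fin n, (a i.castSucc - 1))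
            (st₀ (idx₀ (Fin.init b))) (cdeg (Fin.init b) - st₀ (idx₀ (Fin.init b)))
            (b (Fin.last n)) t (by omega) (by omega) (by omega) (by omega)
        obtain ⟨c, hc, hck, hcdeg⟩ := H4 _ hb₀ (st₀ (idx₀ (Fin.init b)) + u')
          (by omega) (by omega)
        refine ⟨Fin.snoc c v', ?_, ?_, ?_⟩
        · rw [mem_Cbox]
          intro i'
          refine Fin.lastCases ?_ ?_ i'
          · simp only [Fin.snoc_last]; omega
          · intro j
            simp only [Fin.snoc_castSucc]
            exact mem_Cbox.mp hc j
        · simp only [Fin.init_snoc, Fin.snoc_last]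
          rw [hck, Nat.pair_eq_pair]
          refine ⟨rfl, ?_⟩
          rw [hcdeg]
          omega
        · rw [degsplit]
          simp only [Fin.init_snoc, Fin.snoc_last]
          rw [hcdeg]
          omega

/-- The degree-`j` slice of the box. -/
def clevel (n : ℕ) (a : Fin n → ℕ) (j : ℕ) : Finset (Fin n → ℕ) :=
  (Cbox n a).filter (fun b => cdeg b = j)

lemma mem_clevel {n : ℕ} {a : Fin n → ℕ} {j : ℕ} {b : Fin n → ℕ} :
    b ∈ clevel n a j ↔ (∀ i, b i < a i) ∧ cdeg b = j := by
  simp [clevel, mem_Cbox]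

/-- The matching theorem: if level `j` of the box is no larger than level `j+1`, then there
is an injection of level `j` into level `j+1` which moves every vector componentwise up. -/
theorem exists_matching (n : ℕ) (a : Fin n → ℕ) (j : ℕ)
    (hN : (clevel n a j).card ≤ (clevel n a (j+1)).card) :
    ∃ f : (Fin n → ℕ) → (Fin n → ℕ), Set.InjOn f (clevel n a j) ∧
      ∀ b ∈ clevel n a j, f b ∈ clevel n a (j+1) ∧ ∀ i, b i ≤ f b i := by
  classical
  obtain ⟨idx, st, H1, H2, H3, H4⟩ := exists_scd n a
  -- no chain through level j ends at level j
  have key : ∀ b ∈ clevel n a j, j + 1 + st (idx b) ≤ ∑ i, (a i - 1) := by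
    by_contra hcon
    push_neg at hcon
    obtain ⟨bb, hbb, hbbm⟩ := hcon
    have hbbbox : bb ∈ Cbox n a := mem_Cbox.mpr (mem_clevel.mp hbb).1
    have hbbdeg : cdeg bb = j := (mem_clevel.mp hbb).2
    obtain ⟨h1a, h1b⟩ := H1 _ hbbbox
    rw [hbbdeg] at h1a h1b
    have hdown : ∀ b' ∈ clevel n a (j+1), ∃ c ∈ Cbox n a, idx c = idx b' ∧ cdeg c = j := by
      intro b' hb'
      have hb'box : b' ∈ Cbox n a := mem_Cbox.mpr (mem_clevel.mp hb').1
      have hb'deg : cdeg b' = j + 1 := (mem_clevel.mp hb').2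
      obtain ⟨h1a', h1b'⟩ := H1 _ hb'box
      rw [hb'deg] at h1a' h1b'
      exact H4 _ hb'box j (by omega) (by omega)
    choose g hg1 hg2 hg3 using hdown
    have himg : ∀ b' ∈ clevel n a (j+1),
        (fun b'' => if h : b'' ∈ clevel n a (j+1) then g b'' h else b'') b' ∈
          (clevel n a j).erase bb := by
      intro b' hb'
      simp only [dif_pos hb']
      have hb'box : b' ∈ Cbox n a := mem_Cbox.mpr (mem_clevel.mp hb').1
      have hb'deg : cdeg b' = j + 1 := (mem_clevel.mp hb').2
      obtain ⟨h1a', h1b'⟩ := H1 _ hb'box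
      rw [hb'deg] at h1a' h1b'
      refine Finset.mem_erase.mpr ⟨?_, mem_clevel.mpr ⟨mem_Cbox.mp (hg1 b' hb'), hg3 b' hb'⟩⟩
      intro heq
      have h2 : idx bb = idx b' := by rw [← heq]; exact hg2 b' hb'
      have h3 : st (idx bb) = st (idx b') := by rw [h2]
      omega
    have hinj : Set.InjOn (fun b'' => if h : b'' ∈ clevel n a (j+1) then g b'' h else b'')
        (clevel n a (j+1)) := by
      intro x hx y hy hxy
      simp only [Finset.mem_coe] at hx hy
      simp only [dif_pos hx, dif_pos hy] at hxy
      have hxbox : x ∈ Cbox n a := mem_Cbox.mpr (mem_clevel.mp hx).1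
      have hybox : y ∈ Cbox n a := mem_Cbox.mpr (mem_clevel.mp hy).1
      have hidxy : idx x = idx y := by
        rw [← hg2 x hx, ← hg2 y hy, hxy]
      exact H2 _ hxbox _ hybox hidxy (by rw [(mem_clevel.mp hx).2, (mem_clevel.mp hy).2])
    have hcard := Finset.card_le_card_of_injOn _ himg hinj
    rw [Finset.card_erase_of_mem hbb] at hcard
    have hpos : 0 < (clevel n a j).card := Finset.card_pos.mpr ⟨bb, hbb⟩
    omega
  have hup : ∀ b ∈ clevel n a j, ∃ c ∈ Cbox n a, idx c = idx b ∧ cdeg c = j + 1 := by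
    intro b hb
    have hbbox : b ∈ Cbox n a := mem_Cbox.mpr (mem_clevel.mp hb).1
    have hbdeg : cdeg b = j := (mem_clevel.mp hb).2
    obtain ⟨h1a, h1b⟩ := H1 _ hbbox
    rw [hbdeg] at h1a h1b
    exact H4 _ hbbox (j+1) (by omega) (key b hb)
  choose g hg1 hg2 hg3 using hup
  refine ⟨fun b => if h : b ∈ clevel n a j then g b h else b, ?_, ?_⟩
  · intro x hx y hy hxy
    simp only [Finset.mem_coe] at hx hy
    simp only [dif_pos hx, dif_pos hy] at hxy
    have hxbox : x ∈ Cbox n a := mem_Cbox.mpr (mem_clevel.mp hx).1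
    have hybox : y ∈ Cbox n a := mem_Cbox.mpr (mem_clevel.mp hy).1
    have hidxy : idx x = idx y := by rw [← hg2 x hx, ← hg2 y hy, hxy]
    exact H2 _ hxbox _ hybox hidxy (by rw [(mem_clevel.mp hx).2, (mem_clevel.mp hy).2])
  · intro b hb
    simp only [dif_pos hb]
    have hbbox : b ∈ Cbox n a := mem_Cbox.mpr (mem_clevel.mp hb).1
    refine ⟨mem_clevel.mpr ⟨mem_Cbox.mp (hg1 b hb), hg3 b hb⟩, ?_⟩
    exact H3 _ hbbox _ (hg1 b hb) (hg2 b hb).symm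
      (by rw [(mem_clevel.mp hb).2, hg3 b hb]; omega)


section Alg

variable {K : Type*} [Field K] {n : ℕ}

/-- Identification of functions with finsupps. -/
noncomputable def eF {n : ℕ} : (Fin n → ℕ) ≃ (Fin n →₀ ℕ) :=
  Finsupp.equivFunOnFinite.symm

@[simp] lemma eF_apply {n : ℕ} (bf : Fin n → ℕ) (i : Fin n) : (eF bf) i = bf i := rfl

lemma fdeg_eq (d : Fin n →₀ ℕ) : d.degree = ∑ i, d i := by
  rw [Finsupp.degree]
  exact Finset.sum_subset (Finset.subset_univ _)
    (by simp +contextual [Finsupp.notMem_support_iff])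

variable (a : Fin n → ℕ) (bI : Ideal (MvPolynomial (Fin n) K))
variable (hbI : bI = Ideal.span (Set.range fun i : Fin n => (X i : MvPolynomial (Fin n) K) ^ a i))

include hbI in
lemma mem_bI {p : MvPolynomial (Fin n) K} :
    p ∈ bI ↔ ∀ m ∈ p.support, ∃ i, Finsupp.single i (a i) ≤ m := by
  have : (Set.range fun i : Fin n => (X i : MvPolynomial (Fin n) K) ^ a i) =
      (fun s => monomial s (1 : K)) '' (Set.range fun i : Fin n => Finsupp.single i (a i)) := by
    ext q
    simp only [Set.mem_range, Set.mem_image, X_pow_eq_monomial]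
    constructor
    · rintro ⟨i, rfl⟩; exact ⟨Finsupp.single i (a i), ⟨i, rfl⟩, rfl⟩
    · rintro ⟨s, ⟨i, rfl⟩, rfl⟩; exact ⟨i, rfl⟩
  rw [hbI, this, mem_ideal_span_monomial_image]
  simp only [Set.mem_range, exists_exists_eq_and]

include hbI in
lemma monomial_mem_bI {d : Fin n →₀ ℕ} (c : K) {i : Fin n} (hi : a i ≤ d i) :
    monomial d c ∈ bI := by
  classical
  rw [mem_bI a bI hbI]
  intro m hm
  have hmd : m = d := by
    by_cases hc : c = 0
    · simp [hc] at hm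
    · rw [support_monomial, if_neg hc] at hm
      exact Finset.mem_singleton.mp hm
  exact ⟨i, hmd ▸ Finsupp.single_le_iff.mpr hi⟩

lemma mk_smul (c : K) (q : MvPolynomial (Fin n) K) :
    Ideal.Quotient.mk bI (c • q) = c • Ideal.Quotient.mk bI q := by
  rw [← Ideal.Quotient.mkₐ_eq_mk K bI]
  exact map_smul (Ideal.Quotient.mkₐ K bI) c q

include hbI in
/-- decomposition: the class of any polynomial lies in the span of the classes of the box
monomials appearing in it. -/
lemma decomp (p : MvPolynomial (Fin n) K) :
    Ideal.Quotient.mk bI p ∈ Submodule.span K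
      ((fun d => Ideal.Quotient.mk bI (monomial d (1 : K))) ''
        {d | d ∈ p.support ∧ ∀ i, d i < a i}) := by
  have key : Ideal.Quotient.mk bI p =
      ∑ v ∈ p.support, Ideal.Quotient.mk bI (monomial v (coeff v p)) := by
    conv_lhs => rw [← support_sum_monomial_coeff p]
    rw [map_sum]
  rw [key]
  apply Submodule.sum_mem
  intro v hv
  by_cases hbox : ∀ i, v i < a i
  · have h1 : (monomial v) (coeff v p) = (coeff v p) • (monomial v (1 : K)) := by
      rw [smul_monomial, smul_eq_mul, mul_one]
    rw [h1, mk_smul]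
    exact Submodule.smul_mem _ _ (Submodule.subset_span ⟨v, ⟨hv, hbox⟩, rfl⟩)
  · push_neg at hbox
    obtain ⟨i, hi⟩ := hbox
    rw [Ideal.Quotient.eq_zero_iff_mem.mpr (monomial_mem_bI a bI hbI _ hi)]
    exact Submodule.zero_mem _

include hbI in
lemma mkm_linearIndependent (U : Finset (Fin n → ℕ)) (hU : ∀ bf ∈ U, ∀ i, bf i < a i) :
    LinearIndependent K (fun u : U => Ideal.Quotient.mk bI (monomial (eF ↑u) (1 : K))) := by
  have h1 : LinearIndependent K
      (fun u : U => (monomial (eF (↑u : Fin n → ℕ)) (1 : K) : MvPolynomial (Fin n) K)) := by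
    have := (basisMonomials (Fin n) K).linearIndependent.comp
      (fun u : U => eF (↑u : Fin n → ℕ))
      (eF.injective.comp Subtype.val_injective)
    simpa [coe_basisMonomials, Function.comp_def] using this
  have h2 : Disjoint (Submodule.span K
        (Set.range fun u : U => (monomial (eF (↑u : Fin n → ℕ)) (1 : K) : MvPolynomial (Fin n) K)))
      (LinearMap.ker (Ideal.Quotient.mkₐ K bI).toLinearMap) := by
    rw [Submodule.disjoint_def]
    intro x hx hker
    have hxb : x ∈ bI := by
      simpa [LinearMap.mem_ker, Ideal.Quotient.mkₐ_eq_mk,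
        Ideal.Quotient.eq_zero_iff_mem] using hker
    have hsupp : ∀ m ∈ x.support, ∀ i, m i < a i := by
      have himg : (Set.range fun u : U =>
          (monomial (eF (↑u : Fin n → ℕ)) (1 : K) : MvPolynomial (Fin n) K)) =
          (fun d => monomial d (1 : K)) '' (eF '' (↑U : Set (Fin n → ℕ))) := by
        rw [Set.image_image]
        ext y
        constructor
        · rintro ⟨u, rfl⟩; exact ⟨↑u, Finset.mem_coe.mpr u.2, rfl⟩
        · rintro ⟨bf, hbf, rfl⟩; exact ⟨⟨bf, Finset.mem_coe.mp hbf⟩, rfl⟩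
      rw [himg] at hx
      clear hker hxb
      induction hx using Submodule.span_induction with
      | mem y hy =>
          obtain ⟨d, ⟨bf, hbf, rfl⟩, rfl⟩ := hy
          intro m hm i
          have hmd : m = eF bf := by
            classical
            rw [support_monomial, if_neg (one_ne_zero (α := K))] at hm
            exact Finset.mem_singleton.mp hm
          rw [hmd]
          simpa using hU bf hbf i
      | zero => simp
      | add y z _ _ hy hz =>
          intro m hm
          rcases Finset.mem_union.mp (MvPolynomial.support_add hm) with h | h
          · exact hy m h
          · exact hz m h
      | smul c y _ hy =>
          intro m hm
          exact hy m (Finsupp.support_smul hm)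
    rcases (mem_bI a bI hbI).mp hxb with hdom
    by_contra hx0
    have hne : x.support.Nonempty := by
      rwa [Finset.nonempty_iff_ne_empty, ne_eq, MvPolynomial.support_eq_empty]
    obtain ⟨m, hm⟩ := hne
    obtain ⟨i, hi⟩ := hdom m hm
    have := Finsupp.single_le_iff.mp hi
    exact absurd this (by have := hsupp m hm i; omega)
  have h3 := h1.map h2
  simpa [Function.comp_def, Ideal.Quotient.mkₐ_eq_mk] using h3

include hbI in
lemma finrank_span_mkm (U : Finset (Fin n → ℕ)) (hU : ∀ bf ∈ U, ∀ i, bf i < a i) :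
    finrank K (Submodule.span K
      ((fun bf => Ideal.Quotient.mk bI (monomial (eF bf) (1 : K))) '' (↑U : Set (Fin n → ℕ)))) =
      U.card := by
  have hind := mkm_linearIndependent a bI hbI U hU
  have hset : ((fun bf => Ideal.Quotient.mk bI (monomial (eF bf) (1 : K))) ''
      (↑U : Set (Fin n → ℕ))) =
      Set.range (fun u : U => Ideal.Quotient.mk bI (monomial (eF ↑u) (1 : K))) := by
    ext y
    constructor
    · rintro ⟨bf, hbf, rfl⟩; exact ⟨⟨bf, Finset.mem_coe.mp hbf⟩, rfl⟩
    · rintro ⟨u, rfl⟩; exact ⟨↑u, Finset.mem_coe.mpr u.2, rfl⟩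
  rw [hset, finrank_span_eq_card hind]
  simp

noncomputable def gradedPiece' (i : ℕ) : Submodule K (MvPolynomial (Fin n) K ⧸ bI) :=
  (homogeneousSubmodule (Fin n) K i).map (Ideal.Quotient.mkₐ K bI).toLinearMap

lemma mem_gradedPiece' {i : ℕ} {x : MvPolynomial (Fin n) K ⧸ bI} :
    x ∈ gradedPiece' bI i ↔ ∃ p, p.IsHomogeneous i ∧ Ideal.Quotient.mk bI p = x := by
  simp only [gradedPiece', Submodule.mem_map, mem_homogeneousSubmodule,
    AlgHom.toLinearMap_apply, Ideal.Quotient.mkₐ_eq_mk]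

lemma deg_of_mem_support {p : MvPolynomial (Fin n) K} {t : ℕ} (hp : p.IsHomogeneous t)
    {d : Fin n →₀ ℕ} (hd : d ∈ p.support) : (∑ i, d i) = t := by
  rw [← fdeg_eq, Finsupp.degree_eq_weight_one]
  exact hp (mem_support_iff.mp hd)

include hbI in
lemma gp_span (t : ℕ) : gradedPiece' bI t = Submodule.span K
    ((fun bf => Ideal.Quotient.mk bI (monomial (eF bf) (1 : K))) ''
      (↑(clevel n a t) : Set (Fin n → ℕ))) := by
  apply le_antisymm
  · intro x hx
    obtain ⟨p, hp, rfl⟩ := (mem_gradedPiece' bI).mp hx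
    refine Submodule.span_le.mpr ?_ (decomp a bI hbI p)
    rintro y ⟨d, ⟨hd, hbox⟩, rfl⟩
    apply Submodule.subset_span
    refine ⟨Finsupp.equivFunOnFinite d, ?_, ?_⟩
    · refine Finset.mem_coe.mpr (mem_clevel.mpr ⟨?_, ?_⟩)
      · intro i; simpa using hbox i
      · simpa [cdeg] using deg_of_mem_support hp hd
    · simp only [eF, Equiv.symm_apply_apply]
  · rw [Submodule.span_le]
    rintro y ⟨bf, hbf, rfl⟩
    obtain ⟨hbox, hdeg⟩ := mem_clevel.mp (Finset.mem_coe.mp hbf)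
    refine (mem_gradedPiece' bI).mpr ⟨monomial (eF bf) 1, ?_, rfl⟩
    apply isHomogeneous_monomial
    rw [fdeg_eq]
    simpa [cdeg] using hdeg

/-- The subset of level `t` of the box dominating some element of `S`. -/
noncomputable def Dfun (S : Set (Fin n →₀ ℕ)) (t : ℕ) : Finset (Fin n → ℕ) :=
  @Finset.filter _ (fun bf => ∃ s ∈ S, ∀ i, s i ≤ bf i) (Classical.decPred _) (clevel n a t)

lemma mem_Dfun {S : Set (Fin n →₀ ℕ)} {t : ℕ} {bf : Fin n → ℕ} :
    bf ∈ Dfun a S t ↔ bf ∈ clevel n a t ∧ ∃ s ∈ S, ∀ i, s i ≤ bf i :=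
  @Finset.mem_filter _ _ (Classical.decPred _) _ _

include hbI in
lemma J_span (S : Set (Fin n →₀ ℕ)) (J : Ideal (MvPolynomial (Fin n) K ⧸ bI))
    (hJs : J = Ideal.span ((Ideal.Quotient.mk bI) '' ((fun s => monomial s (1 : K)) '' S)))
    (t : ℕ) :
    (J.restrictScalars K ⊓ gradedPiece' bI t : Submodule K _) = Submodule.span K
      ((fun bf => Ideal.Quotient.mk bI (monomial (eF bf) (1 : K))) ''
        (↑(Dfun a S t) : Set (Fin n → ℕ))) := by
  apply le_antisymm
  · intro x hx
    obtain ⟨hxJ, hxg⟩ := Submodule.mem_inf.mp hx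
    rw [Submodule.restrictScalars_mem] at hxJ
    obtain ⟨p, hp, rfl⟩ := (mem_gradedPiece' bI).mp hxg
    rw [hJs, ← Ideal.map_span] at hxJ
    obtain ⟨q, hq, hqx⟩ :=
      (Ideal.mem_map_iff_of_surjective _ Ideal.Quotient.mk_surjective).mp hxJ
    have hdiff : p - q ∈ bI := Ideal.Quotient.eq.mp hqx.symm
    have hpI : p ∈ Ideal.span ((fun s => monomial s (1 : K)) ''
        (S ∪ Set.range fun i : Fin n => Finsupp.single i (a i))) := by
      rw [Set.image_union, Ideal.span_union]
      have h1 : q ∈ Ideal.span ((fun s => monomial s (1 : K)) '' S) ⊔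
          Ideal.span ((fun s => monomial s (1 : K)) ''
            (Set.range fun i : Fin n => Finsupp.single i (a i))) :=
        Submodule.mem_sup_left hq
      have h2 : p - q ∈ Ideal.span ((fun s => monomial s (1 : K)) '' S) ⊔
          Ideal.span ((fun s => monomial s (1 : K)) ''
            (Set.range fun i : Fin n => Finsupp.single i (a i))) := by
        apply Submodule.mem_sup_right
        have hspan : bI = Ideal.span ((fun s => monomial s (1 : K)) ''
            (Set.range fun i : Fin n => Finsupp.single i (a i))) := by
          rw [hbI]
          congr 1
          ext r
          simp only [Set.mem_range, Set.mem_image, X_pow_eq_monomial]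
          constructor
          · rintro ⟨i, rfl⟩; exact ⟨Finsupp.single i (a i), ⟨i, rfl⟩, rfl⟩
          · rintro ⟨s, ⟨i, rfl⟩, rfl⟩; exact ⟨i, rfl⟩
        rw [← hspan]; exact hdiff
      have := Submodule.add_mem _ h1 h2
      simpa using this
    have hdom := mem_ideal_span_monomial_image.mp hpI
    refine Submodule.span_le.mpr ?_ (decomp a bI hbI p)
    rintro y ⟨d, ⟨hd, hbox⟩, rfl⟩
    apply Submodule.subset_span
    refine ⟨Finsupp.equivFunOnFinite d, ?_, ?_⟩
    · refine Finset.mem_coe.mpr ((mem_Dfun a).mpr ⟨mem_clevel.mpr ⟨?_, ?_⟩, ?_⟩)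
      · intro i; simpa using hbox i
      · simpa [cdeg] using deg_of_mem_support hp hd
      · obtain ⟨s, hs, hsd⟩ := hdom d hd
        rcases hs with hs | ⟨i, rfl⟩
        · exact ⟨s, hs, fun i => by simpa using Finsupp.le_def.mp hsd i⟩
        · exact absurd (Finsupp.single_le_iff.mp hsd) (by have := hbox i; omega)
    · simp only [eF, Equiv.symm_apply_apply]
  · rw [Submodule.span_le]
    rintro y ⟨bf, hbf, rfl⟩
    obtain ⟨hlev, s, hs, hsb⟩ := (mem_Dfun a).mp (Finset.mem_coe.mp hbf)
    obtain ⟨hbox, hdeg⟩ := mem_clevel.mp hlev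
    have hle : s ≤ eF bf := Finsupp.le_def.mpr fun i => by simpa using hsb i
    refine Submodule.mem_inf.mpr ⟨?_, ?_⟩
    · rw [Submodule.restrictScalars_mem, hJs]
      have hmul : monomial (eF bf) (1 : K) = monomial (eF bf - s) 1 * monomial s 1 := by
        rw [monomial_mul, one_mul, tsub_add_cancel_of_le hle]
      show Ideal.Quotient.mk bI (monomial (eF bf) (1 : K)) ∈ _
      rw [hmul, map_mul]
      exact Ideal.mul_mem_left _ _
        (Ideal.subset_span ⟨monomial s 1, ⟨s, hs, rfl⟩, rfl⟩)
    · refine (mem_gradedPiece' bI).mpr ⟨monomial (eF bf) 1, ?_, rfl⟩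
      apply isHomogeneous_monomial
      rw [fdeg_eq]
      simpa [cdeg] using hdeg

end Alg


end MonCI

/-- **Hilbert functions of monomial ideals in a monomial complete intersection do not drop
before the Hilbert function of the ring does.**  Let
`B = K[x_1,…,x_n]/(x_1^{a_1},…,x_n^{a_n})` and let `J ⊆ B` be a monomial ideal.  If
`dim_K B_j ≤ dim_K B_{j+1}`, then `H(J, j) ≤ H(J, j+1)`, where `H(J, i) = dim_K (J ∩ B_i)`. -/
theorem monomial_ideal_hilbert_function_monotone
    {K : Type*} [Field K] {n : ℕ} (a : Fin n → ℕ) (ha : ∀ i, 0 < a i)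
    (b : Ideal (MvPolynomial (Fin n) K))
    (hb : b = Ideal.span (Set.range fun i : Fin n => (X i : MvPolynomial (Fin n) K) ^ a i))
    (J : Ideal (MvPolynomial (Fin n) K ⧸ b)) (hJ : IsMonomialIdealOfQuotient b J)
    (j : ℕ) (hj : finrank K (gradedPiece b j) ≤ finrank K (gradedPiece b (j + 1))) :
    finrank K (J.restrictScalars K ⊓ gradedPiece b j : Submodule K _) ≤
      finrank K (J.restrictScalars K ⊓ gradedPiece b (j + 1) : Submodule K _) := by
  classical
  obtain ⟨M, hM1, hM2⟩ := hJ
  have hMS : M = (fun s => monomial s (1 : K)) '' {s : Fin n →₀ ℕ | monomial s (1 : K) ∈ M} := by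
    ext q
    constructor
    · intro hq; obtain ⟨s, rfl⟩ := hM1 q hq; exact ⟨s, hq, rfl⟩
    · rintro ⟨s, hs, rfl⟩; exact hs
  rw [hMS] at hM2
  set S := {s : Fin n →₀ ℕ | monomial s (1 : K) ∈ M} with hS
  have hgp : ∀ t, gradedPiece b t = MonCI.gradedPiece' b t := fun t => rfl
  have hlevbox : ∀ t : ℕ, ∀ bf ∈ MonCI.clevel n a t, ∀ i, bf i < a i := fun t bf hbf =>
    (MonCI.mem_clevel.mp hbf).1
  have hDsub : ∀ t : ℕ, ∀ bf ∈ MonCI.Dfun a S t, ∀ i, bf i < a i := fun t bf hbf =>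
    (MonCI.mem_clevel.mp ((MonCI.mem_Dfun a).mp hbf).1).1
  have e1 := MonCI.J_span a b hb S J hM2 j
  have e2 := MonCI.J_span a b hb S J hM2 (j + 1)
  rw [hgp j, e1, MonCI.finrank_span_mkm a b hb _ (hDsub j),
    hgp (j + 1), e2, MonCI.finrank_span_mkm a b hb _ (hDsub (j + 1))]
  rw [hgp j, MonCI.gp_span a b hb j, MonCI.finrank_span_mkm a b hb _ (hlevbox j),
    hgp (j + 1), MonCI.gp_span a b hb (j + 1),
    MonCI.finrank_span_mkm a b hb _ (hlevbox (j + 1))] at hj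
  obtain ⟨f, hfi, hfm⟩ := MonCI.exists_matching n a j hj
  apply Finset.card_le_card_of_injOn f
  · intro bf hbf
    obtain ⟨hlev, s, hs, hsb⟩ := (MonCI.mem_Dfun a).mp hbf
    obtain ⟨hmem, hdom⟩ := hfm bf hlev
    exact (MonCI.mem_Dfun a).mpr ⟨hmem, ⟨s, hs, fun i => le_trans (hsb i) (hdom i)⟩⟩
  · exact hfi.mono (fun x hx =>
      Finset.mem_coe.mpr (((MonCI.mem_Dfun a).mp (Finset.mem_coe.mp hx)).1))
end
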